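/- For a₁,…,a_n ∈ {0,1} with a₁ ≠ 0 and a_n ≠ 1, the classical duality formula for iterated integrals holds: I(0;a₁,…,a_n;1) = (−1)ⁿ I(0;1−a_n,…,1−a₁;1). -/

import Mathlib

open MeasureTheory

noncomputable def J (n : ℕ) (b : Fin n → ℂ) : ℂ :=
  ∫ t in {t : Fin n → ℝ | (∀ i, t i ∈ Set.Ioo (0:ℝ) 1) ∧ StrictMono t},
    ∏ i, ((t i : ℂ) - b i)⁻¹

lemma J_congr {m n : ℕ} (h : m = n) (b : Fin n → ℂ) :
    J m (fun i => b (Fin.cast h i)) = J n b := by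
  subst h; rfl

lemma J_rev (n : ℕ) (b : Fin n → ℂ) :
    J n b = (-1 : ℂ) ^ n * J n (fun i => 1 - b (Fin.rev i)) := by
  set S : Set (Fin n → ℝ) := {t | (∀ i, t i ∈ Set.Ioo (0:ℝ) 1) ∧ StrictMono t}
  set ψ : (Fin n → ℝ) → (Fin n → ℝ) := fun t i => 1 - t (Fin.rev i) with hψ
  have hinv : Function.Involutive ψ := by
    intro t; funext i; simp [ψ]
  have mp2 : MeasurePreserving (fun t : Fin n → ℝ => fun i => t (Fin.rev i))
      volume volume := by
    have := volume_measurePreserving_piCongrLeft (fun _ : Fin n => ℝ)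
      (Fin.revPerm : Equiv.Perm (Fin n))
    convert this using 1
    funext t
    ext i
    simp [MeasurableEquiv.piCongrLeft, Equiv.piCongrLeft, Equiv.piCongrLeft']
    exact (eq_rec_constant _ _).symm
  have mp1 : MeasurePreserving (fun t : Fin n → ℝ => fun i => 1 - t i)
      volume volume := by
    have h1 : MeasurePreserving (fun x : ℝ => 1 - x) volume volume :=
      Measure.measurePreserving_sub_left volume 1
    have := measurePreserving_pi (fun _ : Fin n => (volume : Measure ℝ))
      (fun _ => volume) (f := fun _ x => 1 - x) (fun _ => h1)
    simpa [MeasureTheory.volume_pi] using this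
  have mpψ : MeasurePreserving ψ volume volume := mp1.comp mp2
  let e : (Fin n → ℝ) ≃ᵐ (Fin n → ℝ) :=
    { toFun := ψ, invFun := ψ, left_inv := hinv.leftInverse,
      right_inv := hinv.rightInverse,
      measurable_toFun := mpψ.measurable,
      measurable_invFun := mpψ.measurable }
  have hemb : MeasurableEmbedding ψ := by
    have := e.measurableEmbedding
    simpa [e, MeasurableEquiv.coe_mk, Equiv.coe_fn_mk] using this
  have hpre : ψ ⁻¹' S = S := by
    ext t
    simp only [S, Set.mem_preimage, Set.mem_setOf_eq]
    constructor
    · rintro ⟨h1, h2⟩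
      refine ⟨fun i => ?_, fun i j hij => ?_⟩
      · have := h1 (Fin.rev i)
        simp only [ψ, Fin.rev_rev, Set.mem_Ioo] at this ⊢
        constructor <;> linarith [this.1, this.2]
      · have : Fin.rev j < Fin.rev i := Fin.rev_lt_rev.mpr hij
        have := h2 this
        simp only [ψ, Fin.rev_rev] at this
        linarith
    · rintro ⟨h1, h2⟩
      refine ⟨fun i => ?_, fun i j hij => ?_⟩
      · have := h1 (Fin.rev i)
        simp only [ψ, Set.mem_Ioo] at this ⊢
        constructor <;> linarith [this.1, this.2]
      · have : Fin.rev j < Fin.rev i := Fin.rev_lt_rev.mpr hij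
        have := h2 this
        simp only [ψ]
        linarith
  have key : J n b = ∫ t in S, (fun t : Fin n → ℝ => ∏ i, ((t i : ℂ) - b i)⁻¹) (ψ t) := by
    rw [J]
    rw [← mpψ.setIntegral_preimage_emb hemb, hpre]
  rw [key]
  have : ∀ t : Fin n → ℝ,
      (∏ i, ((ψ t i : ℂ) - b i)⁻¹)
        = (-1 : ℂ) ^ n * ∏ i, ((t i : ℂ) - (1 - b (Fin.rev i)))⁻¹ := by
    intro t
    have h1 : ∀ i, ((ψ t i : ℂ) - b i)⁻¹ = (-1) * ((t (Fin.rev i) : ℂ) - (1 - b i))⁻¹ := by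
      intro i
      have : ((ψ t i : ℂ) - b i) = -(((t (Fin.rev i) : ℂ)) - (1 - b i)) := by
        simp [ψ]; ring
      rw [this, inv_neg]; ring
    simp_rw [h1]
    rw [Finset.prod_mul_distrib, Finset.prod_const, Finset.card_univ, Fintype.card_fin]
    congr 1
    exact (Fintype.prod_equiv (Fin.revPerm : Equiv.Perm (Fin n)) _ _
      (fun i => by simp [Fin.rev_rev])).symm
  simp_rw [this]
  rw [integral_const_mul]
  rfl


/-- The iterated integral `I(0;a₁,…,a_n;1)` over the simplex `0 < t₁ < ⋯ < t_n < 1`. -/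
noncomputable def II (a : List ℂ) : ℂ :=
  ∫ t in {t : Fin a.length → ℝ | (∀ i, t i ∈ Set.Ioo (0:ℝ) 1) ∧ StrictMono t},
    ∏ i, ((t i : ℂ) - a.get i)⁻¹

/-- Classical duality: for letters in `{0,1}` with `a₁ = 1` and `a_n = 0`,
`I(0;a₁,…,a_n;1) = (−1)ⁿ I(0;1−a_n,…,1−a₁;1)`. -/
theorem classical_duality (l : List ℂ) (hne : l ≠ [])
    (hmem : ∀ a ∈ l, a = 0 ∨ a = 1)
    (hhead : l.head? = some 1) (hlast : l.getLast? = some 0) :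
    II l = (-1 : ℂ) ^ l.length * II ((l.map (fun a => 1 - a)).reverse) := by
  have h1 : II l = J l.length l.get := rfl
  have h2 : II ((l.map (fun a => 1 - a)).reverse)
      = J l.length (fun i => 1 - l.get (Fin.rev i)) := by
    have hl : ((l.map (fun a => 1 - a)).reverse).length = l.length := by simp
    rw [show II ((l.map (fun a => 1 - a)).reverse)
        = J _ ((l.map (fun a => 1 - a)).reverse).get from rfl]
    rw [← J_congr hl (fun i => 1 - l.get (Fin.rev i))]
    congr 1
    funext i
    simp only [List.get_eq_getElem, List.getElem_reverse, List.getElem_map, Fin.rev,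
      Fin.cast, List.length_reverse, List.length_map]
    congr 2
    omega
  rw [h1, h2]
  exact J_rev _ _
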